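/- Let h : ℝ → ℝ be continuous and periodic with period T > 0. Then the set of sampling intervals Δt ∈ (0, ∞) for which it is NOT the case that for every shift s ∈ ℝ and every continuous g : ℝ → ℝ the sample averages (1/N) ∑_{n=0}^{N-1} g(h(n·Δt + s)) converge to (1/T) ∫_0^T g(h(t)) dt, has Lebesgue measure zero. In other words, every periodic signal has sampling stationarity with respect to all sampling intervals except for a set of intervals of Lebesgue measure zero. -/

import Mathlib

open Filter MeasureTheory Real AddCircle Complex

lemma weyl_fourier {T : ℝ} [hT : Fact (0 < T)] {Δt : ℝ} (hirr : Irrational (Δt / T))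
    (s : ℝ) (k : ℤ) :
    Tendsto (fun N : ℕ => (N : ℂ)⁻¹ * ∑ n ∈ Finset.range N,
        fourier (T := T) k ((n * Δt + s : ℝ) : AddCircle T))
      atTop (nhds (∫ x, fourier (T := T) k x ∂haarAddCircle)) := by
  have hT0 : (0:ℝ) < T := hT.out
  rcases eq_or_ne k 0 with rfl | hk
  · have hint : ∫ x, fourier (T := T) (0:ℤ) x ∂haarAddCircle = 1 := by
      simp [fourier_zero, measure_univ]
    rw [hint]
    have heq : (fun N : ℕ => (N : ℂ)⁻¹ * ∑ n ∈ Finset.range N,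
        fourier (T := T) (0:ℤ) ((n * Δt + s : ℝ) : AddCircle T)) =ᶠ[atTop]
        (fun _ => (1:ℂ)) := by
      filter_upwards [eventually_ge_atTop 1] with N hN
      simp only [fourier_zero, Finset.sum_const, Finset.card_range, nsmul_eq_mul, mul_one]
      have : (N : ℂ) ≠ 0 := Nat.cast_ne_zero.mpr (by omega)
      field_simp
    exact Tendsto.congr' heq.symm tendsto_const_nhds
  · have hint : ∫ x, fourier (T := T) k x ∂haarAddCircle = 0 :=
      integral_eq_zero_of_add_right_eq_neg (fourier_add_half_inv_index hk hT0)
    rw [hint]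
    have hTc : (T:ℂ) ≠ 0 := Complex.ofReal_ne_zero.mpr hT0.ne'
    set z : ℂ := Complex.exp (2 * π * I * k * Δt / T) with hz
    set w : ℂ := Complex.exp (2 * π * I * k * s / T) with hw
    have hterm : ∀ n : ℕ, fourier (T := T) k ((n * Δt + s : ℝ) : AddCircle T) = z ^ n * w := by
      intro n
      rw [fourier_coe_apply]
      rw [← Complex.exp_nat_mul, ← Complex.exp_add]
      congr 1
      field_simp
      push_cast
      ring
    have h2pi : (2 * (π:ℂ) * I) ≠ 0 := by
      simp [Real.pi_ne_zero, Complex.I_ne_zero]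
    have hz1 : z ≠ 1 := by
      intro hz1
      rw [Complex.exp_eq_one_iff] at hz1
      obtain ⟨m, hm⟩ := hz1
      have hkΔt : ((k * Δt : ℝ) : ℂ) = ((m * T : ℝ) : ℂ) := by
        apply mul_left_cancel₀ h2pi
        push_cast
        field_simp at hm
        linear_combination (2 * (π:ℂ) * I) * hm
      have hr : (k : ℝ) * Δt = m * T := by exact_mod_cast hkΔt
      refine hirr ⟨(m:ℚ)/(k:ℚ), ?_⟩
      have hk' : (k:ℝ) ≠ 0 := Int.cast_ne_zero.mpr hk
      push_cast
      field_simp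
      linarith [hr]
    have hnz : ‖z‖ = 1 := by
      rw [hz]
      have : 2 * (π:ℂ) * I * k * Δt / T = ((2 * π * k * Δt / T : ℝ) : ℂ) * I := by
        push_cast; field_simp
      rw [this, Complex.norm_exp_ofReal_mul_I]
    have hsum : ∀ N : ℕ, (N : ℂ)⁻¹ * ∑ n ∈ Finset.range N,
        fourier (T := T) k ((n * Δt + s : ℝ) : AddCircle T)
        = (N : ℂ)⁻¹ * ((z ^ N - 1) / (z - 1) * w) := by
      intro N
      simp_rw [hterm, ← Finset.sum_mul, geom_sum_eq hz1]
    rw [show (0:ℂ) = 0 from rfl]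
    have hbound : ∀ N : ℕ, ‖(N : ℂ)⁻¹ * ((z ^ N - 1) / (z - 1) * w)‖ ≤
        (2 * ‖w‖ / ‖z - 1‖) / N := by
      intro N
      rw [norm_mul, norm_mul, norm_div, norm_inv]
      have h1 : ‖z ^ N - 1‖ ≤ 2 := by
        calc ‖z ^ N - 1‖ ≤ ‖z ^ N‖ + ‖(1:ℂ)‖ := norm_sub_le _ _
        _ = 2 := by rw [norm_pow, hnz]; norm_num
      have hz10 : (0:ℝ) < ‖z - 1‖ := norm_pos_iff.mpr (sub_ne_zero.mpr hz1)
      have hw1 : (0:ℝ) ≤ ‖w‖ := norm_nonneg _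
      rw [Complex.norm_natCast]
      have hN0 : (0:ℝ) ≤ ((N:ℝ))⁻¹ := by positivity
      calc ((N:ℝ))⁻¹ * (‖z ^ N - 1‖ / ‖z - 1‖ * ‖w‖)
          ≤ ((N:ℝ))⁻¹ * (2 / ‖z - 1‖ * ‖w‖) := by gcongr
        _ = (2 * ‖w‖ / ‖z - 1‖) / N := by
            rcases Nat.eq_zero_or_pos N with rfl | hN
            · simp
            · have : ((N:ℝ)) ≠ 0 := Nat.cast_ne_zero.mpr hN.ne'
              field_simp
    apply tendsto_zero_iff_norm_tendsto_zero.mpr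
    exact squeeze_zero (fun N => norm_nonneg _)
      (fun N => (congrArg norm (hsum N)).trans_le (hbound N))
      (tendsto_const_div_atTop_nhds_zero_nat _)

lemma cm_integrable {T : ℝ} [hT : Fact (0 < T)] (f : C(AddCircle T, ℂ)) :
    Integrable (fun x => f x) (haarAddCircle (T := T)) := by
  apply Continuous.integrable_of_hasCompactSupport f.continuous
  exact HasCompactSupport.of_compactSpace _

lemma weyl_span {T : ℝ} [hT : Fact (0 < T)] {Δt : ℝ} (hirr : Irrational (Δt / T))
    (s : ℝ) (f : C(AddCircle T, ℂ))
    (hf : f ∈ Submodule.span ℂ (Set.range (fourier (T := T)))) :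
    Tendsto (fun N : ℕ => (N : ℂ)⁻¹ * ∑ n ∈ Finset.range N,
        f ((n * Δt + s : ℝ) : AddCircle T))
      atTop (nhds (∫ x, f x ∂haarAddCircle)) := by
  induction hf using Submodule.span_induction with
  | mem x hx => obtain ⟨k, rfl⟩ := hx; exact weyl_fourier hirr s k
  | zero => simp [tendsto_const_nhds]
  | add x y hx hy ihx ihy =>
      have : ∫ t, (x + y) t ∂haarAddCircle =
          (∫ t, x t ∂haarAddCircle) + ∫ t, y t ∂haarAddCircle := by
        simp only [ContinuousMap.add_apply]
        exact integral_add (cm_integrable x) (cm_integrable y)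
      rw [this]
      have := ihx.add ihy
      refine this.congr fun N => ?_
      simp [Finset.sum_add_distrib, mul_add]
  | smul a x hx ihx =>
      have : ∫ t, (a • x) t ∂haarAddCircle = a • ∫ t, x t ∂haarAddCircle := by
        simp only [ContinuousMap.smul_apply]
        exact integral_smul a _
      rw [this]
      have := ihx.const_mul a
      refine this.congr fun N => ?_
      simp only [ContinuousMap.smul_apply, smul_eq_mul]
      rw [← Finset.mul_sum]
      ring

lemma weyl_cont {T : ℝ} [hT : Fact (0 < T)] {Δt : ℝ} (hirr : Irrational (Δt / T))
    (s : ℝ) (f : C(AddCircle T, ℂ)) :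
    Tendsto (fun N : ℕ => (N : ℂ)⁻¹ * ∑ n ∈ Finset.range N,
        f ((n * Δt + s : ℝ) : AddCircle T))
      atTop (nhds (∫ x, f x ∂haarAddCircle)) := by
  rw [Metric.tendsto_atTop]
  intro ε hε
  have hf : f ∈ closure ((Submodule.span ℂ (Set.range (fourier (T := T)))) :
      Set C(AddCircle T, ℂ)) := by
    rw [← Submodule.topologicalClosure_coe, span_fourier_closure_eq_top]
    trivial
  obtain ⟨p, hp, hdist⟩ := Metric.mem_closure_iff.mp hf (ε/3) (by positivity)
  obtain ⟨N₀, hN₀⟩ := Metric.tendsto_atTop.mp (weyl_span hirr s p hp) (ε/3) (by positivity)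
  refine ⟨max N₀ 1, fun N hN => ?_⟩
  have hN1 : 1 ≤ N := le_trans (le_max_right _ _) hN
  have hNN0 : N₀ ≤ N := le_trans (le_max_left _ _) hN
  have hNne : ((N:ℝ)) ≠ 0 := Nat.cast_ne_zero.mpr (by omega)
  have hfp : ‖f - p‖ < ε/3 := by rwa [← dist_eq_norm]
  set LfN := (N : ℂ)⁻¹ * ∑ n ∈ Finset.range N, f ((n * Δt + s : ℝ) : AddCircle T) with hLfN
  set LpN := (N : ℂ)⁻¹ * ∑ n ∈ Finset.range N, p ((n * Δt + s : ℝ) : AddCircle T) with hLpN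
  set If := ∫ x, f x ∂(haarAddCircle (T := T)) with hIf
  set Ip := ∫ x, p x ∂(haarAddCircle (T := T)) with hIp
  have key1 : dist LfN LpN ≤ ‖f - p‖ := by
    rw [hLfN, hLpN, dist_eq_norm, ← mul_sub, ← Finset.sum_sub_distrib, norm_mul, norm_inv,
      Complex.norm_natCast]
    calc ((N:ℝ))⁻¹ * ‖∑ n ∈ Finset.range N, (f ((n * Δt + s : ℝ) : AddCircle T) - p ((n * Δt + s : ℝ) : AddCircle T))‖
        ≤ ((N:ℝ))⁻¹ * ∑ n ∈ Finset.range N, ‖f ((n * Δt + s : ℝ) : AddCircle T) - p ((n * Δt + s : ℝ) : AddCircle T)‖ := by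
          gcongr
          exact norm_sum_le _ _
      _ ≤ ((N:ℝ))⁻¹ * ∑ n ∈ Finset.range N, ‖f - p‖ := by
          gcongr with n hn
          exact (congrArg norm (ContinuousMap.sub_apply f p _).symm).le.trans
            (ContinuousMap.norm_coe_le_norm (f - p) _)
      _ = ‖f - p‖ := by
          rw [Finset.sum_const, Finset.card_range, nsmul_eq_mul]
          field_simp
  have key2 : dist Ip If ≤ ‖f - p‖ := by
    rw [hIp, hIf, dist_eq_norm, ← integral_sub (cm_integrable p) (cm_integrable f)]
    have : ‖∫ x, (p x - f x) ∂(haarAddCircle (T := T))‖ ≤ ‖f - p‖ * (haarAddCircle (T := T) Set.univ).toReal := by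
      apply norm_integral_le_of_norm_le_const
      filter_upwards with x
      rw [← norm_neg, neg_sub, ← ContinuousMap.sub_apply]
      exact ContinuousMap.norm_coe_le_norm (f - p) x
    simpa [measure_univ] using this
  calc dist LfN If ≤ dist LfN LpN + dist LpN Ip + dist Ip If := dist_triangle4 _ _ _ _
    _ < ε/3 + ε/3 + ε/3 :=
        add_lt_add (add_lt_add (key1.trans_lt hfp) (hN₀ N hNN0)) (key2.trans_lt hfp)
    _ = ε := by ring

/-- Every continuous periodic signal has sampling stationarity with respect to all
sampling intervals except for a set of intervals of Lebesgue measure zero: the set of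
`Δt ∈ (0,∞)` for which the sample averages fail (for some shift `s` and continuous `g`)
to converge to the waveform average has Lebesgue measure zero. -/
theorem sampling_stationarity_ae_sampling_interval
    (h : ℝ → ℝ) (T : ℝ) (hT : 0 < T) (hcont : Continuous h)
    (hper : ∀ t : ℝ, h (t + T) = h t) :
    volume {Δt : ℝ | Δt ∈ Set.Ioi (0:ℝ) ∧
      ¬ (∀ s : ℝ, ∀ g : ℝ → ℝ, Continuous g →
          Tendsto
            (fun N : ℕ => (1 / (N : ℝ)) * ∑ n ∈ Finset.range N, g (h (n * Δt + s)))
            atTop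
            (nhds ((1 / T) * ∫ t in (0:ℝ)..T, g (h t))))} = 0 := by
  haveI : Fact (0 < T) := ⟨hT⟩
  have hsub : {Δt : ℝ | Δt ∈ Set.Ioi (0:ℝ) ∧
      ¬ (∀ s : ℝ, ∀ g : ℝ → ℝ, Continuous g →
          Tendsto
            (fun N : ℕ => (1 / (N : ℝ)) * ∑ n ∈ Finset.range N, g (h (n * Δt + s)))
            atTop
            (nhds ((1 / T) * ∫ t in (0:ℝ)..T, g (h t))))}
      ⊆ Set.range (fun q : ℚ => (q : ℝ) * T) := by
    rintro Δt ⟨hpos, hbad⟩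
    by_contra hnot
    apply hbad
    have hirr : Irrational (Δt / T) := by
      rintro ⟨q, hq⟩
      refine hnot ⟨q, ?_⟩
      show (q:ℝ) * T = Δt
      rw [hq]
      field_simp
    intro s g hg
    have hperC : Function.Periodic (fun t => (g (h t) : ℂ)) T := fun t => by
      simp [hper t]
    have hFcont : Continuous hperC.lift :=
      Continuous.quotient_liftOn' (by fun_prop) _
    set fC : C(AddCircle T, ℂ) := ⟨hperC.lift, hFcont⟩ with hfC
    have hptF : ∀ x : ℝ, fC ((x : ℝ) : AddCircle T) = (g (h x) : ℂ) := fun x =>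
      hperC.lift_coe x
    have key := weyl_cont hirr s fC
    -- identify the integral
    have hI : ∫ x, fC x ∂haarAddCircle =
        (((1 / T) * ∫ t in (0:ℝ)..T, g (h t) : ℝ) : ℂ) := by
      have h1 : ∫ (a : ℝ) in (0:ℝ)..(0 + T), fC ((a : ℝ) : AddCircle T) =
          ∫ b, fC b ∂(volume : Measure (AddCircle T)) :=
        AddCircle.intervalIntegral_preimage T 0 (fun z => fC z)
      have h2 : ∫ b, fC b ∂(volume : Measure (AddCircle T)) =
          T • ∫ b, fC b ∂haarAddCircle := by
        rw [volume_eq_smul_haarAddCircle, integral_smul_measure,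
          ENNReal.toReal_ofReal hT.le]
      have h3 : ∫ (a : ℝ) in (0:ℝ)..(0 + T), fC ((a : ℝ) : AddCircle T) =
          ((∫ t in (0:ℝ)..T, g (h t) : ℝ) : ℂ) := by
        rw [zero_add]
        simp_rw [hptF]
        exact intervalIntegral.integral_ofReal
      have hTne : (T : ℂ) ≠ 0 := Complex.ofReal_ne_zero.mpr hT.ne'
      rw [h2, h3] at h1
      rw [real_smul] at h1
      rw [Complex.ofReal_mul]
      push_cast
      field_simp
      linear_combination -h1
    rw [hI] at key
    rw [Complex.isometry_ofReal.isEmbedding.tendsto_nhds_iff]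
    convert key using 2 with N
    simp only [Function.comp_apply]
    push_cast
    rw [Finset.mul_sum, Finset.mul_sum]
    congr 1
    funext n
    rw [hptF]
    push_cast
    ring
  exact measure_mono_null hsub ((Set.countable_range _).measure_zero _)
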